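/- arXiv:hep-th/0310218 — 6 statements merged into one kernel-verified Lean document; each statement's English description precedes it below -/
import Mathlib

section
/- Let (e_a) be a basis of 𝔤 with dual basis (e^a) of 𝔤*, and let r = Σ_a (0,e^a) ⊗ (e_a,0) ∈ 𝔥 ⊗ 𝔥. Then r satisfies the classical Yang–Baxter equation [r₁₂,r₁₃] + [r₁₂,r₂₃] + [r₁₃,r₂₃] = 0 in 𝔥 ⊗ 𝔥 ⊗ 𝔥, where for r = Σ_i x_i ⊗ y_i and s = Σ_j x'_j ⊗ y'_j one sets [r₁₂,s₁₃] = Σ_{i,j} [x_i,x'_j] ⊗ y_i ⊗ y'_j, [r₁₂,s₂₃] = Σ_{i,j} x_i ⊗ [y_i,x'_j] ⊗ y'_j, and [r₁₃,s₂₃] = Σ_{i,j} x_i ⊗ x'_j ⊗ [y_i,y'_j] (these trilinear expressions being the well-defined bilinear extensions of the indicated maps). -/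
/-!
STATEMENT 3: With `(e_a)` a basis of `𝔤`, dual basis `(e^a)` of `𝔤*`,
`J_a = (e_a, 0)` and `P^a = (0, e^a)` in `𝔥 = 𝔤 ⊕ 𝔤*`, the classical `r`-matrix
`r = Σ_a P^a ⊗ J_a` satisfies the classical Yang–Baxter equation
`[r₁₂,r₁₃] + [r₁₂,r₂₃] + [r₁₃,r₂₃] = 0` in `𝔥 ⊗ 𝔥 ⊗ 𝔥`, where the three terms are the
bilinear extensions `Σ_{a,b} [P^a,P^b]⊗J_a⊗J_b`, `Σ_{a,b} P^a⊗[J_a,P^b]⊗J_b` and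
`Σ_{a,b} P^a⊗P^b⊗[J_a,J_b]`.
-/

open scoped TensorProduct

variable {L : Type*} [LieRing L] [LieAlgebra ℝ L]

/-- The coadjoint action: `(coad ξ α) ζ = −α ⁅ξ, ζ⁆`. -/
noncomputable def coad (ξ : L) (α : Module.Dual ℝ L) : Module.Dual ℝ L :=
  - (α ∘ₗ (LieAlgebra.ad ℝ L ξ))

/-- The bracket of `𝔥 = 𝔤 ⊕ 𝔤*`. -/
noncomputable def hBracket (x y : L × Module.Dual ℝ L) : L × Module.Dual ℝ L :=
  (⁅x.1, y.1⁆, coad x.1 y.2 - coad y.1 x.2)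

/-- `J_a = (e_a, 0)`. -/
noncomputable def Jgen {ι : Type*} (b : Module.Basis ι ℝ L) (a : ι) : L × Module.Dual ℝ L :=
  (b a, 0)

/-- `P^a = (0, e^a)`. -/
noncomputable def Pgen {ι : Type*} [Fintype ι] [DecidableEq ι] (b : Module.Basis ι ℝ L) (a : ι) :
    L × Module.Dual ℝ L :=
  (0, b.dualBasis a)

lemma brPP {ι : Type*} [Fintype ι] [DecidableEq ι] (b : Module.Basis ι ℝ L) (i j : ι) :
    hBracket (Pgen b i) (Pgen b j) = 0 := by
  simp [hBracket, Pgen, coad]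

lemma brJP {ι : Type*} [Fintype ι] [DecidableEq ι] (b : Module.Basis ι ℝ L) (i j : ι) :
    hBracket (Jgen b i) (Pgen b j)
      = ∑ k : ι, (-(b.dualBasis j ⁅b i, b k⁆)) • Pgen b k := by
  refine Prod.ext ?_ ?_
  · simp [hBracket, Jgen, Pgen, Prod.fst_sum]
  · rw [Prod.snd_sum]
    simp only [hBracket, Jgen, Pgen, Prod.smul_snd, smul_eq_mul]
    apply b.ext
    intro k
    simp [coad, Module.Basis.dualBasis_apply_self, Finsupp.single_apply, Finset.sum_apply,
      Finset.sum_ite_eq', mul_comm]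

lemma brJJ {ι : Type*} [Fintype ι] [DecidableEq ι] (b : Module.Basis ι ℝ L) (i j : ι) :
    hBracket (Jgen b i) (Jgen b j)
      = ∑ k : ι, (b.dualBasis k ⁅b i, b j⁆) • Jgen b k := by
  refine Prod.ext ?_ ?_
  · rw [Prod.fst_sum]
    simp only [hBracket, Jgen, Prod.smul_fst]
    simp only [Module.Basis.dualBasis_apply]
    exact (b.sum_repr ⁅b i, b j⁆).symm
  · simp [hBracket, Jgen, Pgen, coad, Prod.snd_sum]

theorem classical_yang_baxter {ι : Type*} [Fintype ι] [DecidableEq ι] (b : Module.Basis ι ℝ L) :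
    (∑ i : ι, ∑ j : ι,
        hBracket (Pgen b i) (Pgen b j) ⊗ₜ[ℝ] (Jgen b i ⊗ₜ[ℝ] Jgen b j))
    + (∑ i : ι, ∑ j : ι,
        Pgen b i ⊗ₜ[ℝ] (hBracket (Jgen b i) (Pgen b j) ⊗ₜ[ℝ] Jgen b j))
    + (∑ i : ι, ∑ j : ι,
        Pgen b i ⊗ₜ[ℝ] (Pgen b j ⊗ₜ[ℝ] hBracket (Jgen b i) (Jgen b j)))
    = (0 : (L × Module.Dual ℝ L) ⊗[ℝ] ((L × Module.Dual ℝ L) ⊗[ℝ] (L × Module.Dual ℝ L))) := by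
  simp only [brPP, brJP, brJJ, TensorProduct.zero_tmul, Finset.sum_const_zero, zero_add,
    TensorProduct.sum_tmul, TensorProduct.smul_tmul', TensorProduct.tmul_sum,
    TensorProduct.tmul_smul]
  rw [← Finset.sum_add_distrib]
  refine Finset.sum_eq_zero fun x _ => ?_
  rw [Finset.sum_comm (s := Finset.univ) (t := Finset.univ)
    (f := fun x1 a => Pgen b x ⊗ₜ[ℝ] (((b.dualBasis a) ⁅b x, b x1⁆ • Pgen b x1) ⊗ₜ[ℝ] Jgen b a))]
  rw [← Finset.sum_add_distrib]
  refine Finset.sum_eq_zero fun y _ => ?_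
  rw [← Finset.sum_add_distrib]
  refine Finset.sum_eq_zero fun z _ => ?_
  rw [← TensorProduct.tmul_add, ← TensorProduct.add_tmul, ← add_smul, neg_add_cancel,
    zero_smul, TensorProduct.zero_tmul, TensorProduct.tmul_zero]
end

section
/- Let (e_a) be a basis of 𝔤 with dual basis (e^a) of 𝔤*, let r = Σ_a (0,e^a) ⊗ (e_a,0) ∈ 𝔥 ⊗ 𝔥, and define δ : 𝔥 → 𝔥 ⊗ 𝔥 by δ(x) = (ad_x ⊗ id + id ⊗ ad_x)(r), where ad_x y = [x,y] in 𝔥. Then δ((ξ,0)) = 0 for all ξ ∈ 𝔤, and δ((0,α)) = Σ_{b,c} α([e_b,e_c]) (0,e^b) ⊗ (0,e^c) for all α ∈ 𝔤* (i.e. the coboundary cocommutator of r reproduces δ(J_a) = 0 and δ(P^a) = f_{bc}{}^a P^b ⊗ P^c). -/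
/-!
STATEMENT 4: With `r = Σ_a P^a ⊗ J_a` (where `J_a = (e_a,0)`, `P^a = (0,e^a)`), the
coboundary cocommutator `δ(x) = (ad_x ⊗ id + id ⊗ ad_x)(r)`, i.e.
`δ(x) = Σ_a [x,P^a] ⊗ J_a + Σ_a P^a ⊗ [x,J_a]`, satisfies `δ((ξ,0)) = 0` for all `ξ ∈ 𝔤`
and `δ((0,α)) = Σ_{b,c} α([e_b,e_c]) (0,e^b) ⊗ (0,e^c)` for all `α ∈ 𝔤*`.
-/

open scoped TensorProduct

variable {L : Type*} [LieRing L] [LieAlgebra ℝ L]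

/-- The cocommutator `δ(x) = (ad_x ⊗ id + id ⊗ ad_x)(r)` for `r = Σ_a P^a ⊗ J_a`. -/
noncomputable def deltaCocomm {ι : Type*} [Fintype ι] [DecidableEq ι] (b : Module.Basis ι ℝ L)
    (x : L × Module.Dual ℝ L) :
    (L × Module.Dual ℝ L) ⊗[ℝ] (L × Module.Dual ℝ L) :=
  (∑ a : ι, hBracket x (Pgen b a) ⊗ₜ[ℝ] Jgen b a)
    + ∑ a : ι, Pgen b a ⊗ₜ[ℝ] hBracket x (Jgen b a)


lemma expand_dual {ι : Type*} [Fintype ι] [DecidableEq ι] (b : Module.Basis ι ℝ L)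
    (β : Module.Dual ℝ L) :
    ((0, β) : L × Module.Dual ℝ L) = ∑ c, β (b c) • ((0, b.dualBasis c) : L × Module.Dual ℝ L) := by
  ext
  · simp [Prod.fst_sum]
  · simp only [Prod.snd_sum, Prod.smul_snd]
    exact ((by simp only [Module.Basis.coe_dualBasis] at *; exact b.sum_dual_apply_smul_coord β :
      ∑ c, β (b c) • b.dualBasis c = β)).symm ▸ rfl

lemma expand_vec {ι : Type*} [Fintype ι] [DecidableEq ι] (b : Module.Basis ι ℝ L) (ξ : L) :
    ((ξ, 0) : L × Module.Dual ℝ L) = ∑ c, b.dualBasis c ξ • ((b c, 0) : L × Module.Dual ℝ L) := by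
  ext
  · simp only [Prod.fst_sum, Prod.smul_fst]
    exact ((by simp only [Module.Basis.coe_dualBasis, Module.Basis.coord_apply]; exact b.sum_repr ξ :
      ∑ c, b.dualBasis c ξ • b c = ξ)).symm ▸ rfl
  · simp [Prod.snd_sum]

theorem deltaCocomm_eval {ι : Type*} [Fintype ι] [DecidableEq ι] (b : Module.Basis ι ℝ L) :
    (∀ ξ : L, deltaCocomm b ((ξ, 0) : L × Module.Dual ℝ L) = 0) ∧
    (∀ α : Module.Dual ℝ L,
      deltaCocomm b ((0, α) : L × Module.Dual ℝ L)
        = ∑ i : ι, ∑ j : ι, α ⁅b i, b j⁆ • (Pgen b i ⊗ₜ[ℝ] Pgen b j)) := by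
  constructor
  · intro ξ
    have h1 : ∀ a : ι, hBracket ((ξ, 0) : L × Module.Dual ℝ L) (Pgen b a)
        = ((0, coad ξ (b.dualBasis a)) : L × Module.Dual ℝ L) := by
      intro a; simp [hBracket, Pgen, coad]
    have h2 : ∀ a : ι, hBracket ((ξ, 0) : L × Module.Dual ℝ L) (Jgen b a)
        = ((⁅ξ, b a⁆, 0) : L × Module.Dual ℝ L) := by
      intro a; simp [hBracket, Jgen, coad]
    have e1 : ∀ a : ι,
        ((0, coad ξ (b.dualBasis a)) : L × Module.Dual ℝ L) ⊗ₜ[ℝ] Jgen b a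
        = ∑ c, (-(b.dualBasis a ⁅ξ, b c⁆)) •
            (((0, b.dualBasis c) : L × Module.Dual ℝ L) ⊗ₜ[ℝ] Jgen b a) := by
      intro a
      rw [expand_dual b (coad ξ (b.dualBasis a)), TensorProduct.sum_tmul]
      refine Finset.sum_congr rfl fun c _ => ?_
      rw [TensorProduct.smul_tmul']
      have : coad ξ (b.dualBasis a) (b c) = -(b.dualBasis a ⁅ξ, b c⁆) := by
        simp [coad]
      rw [this]
    have e2 : ∀ a : ι,
        Pgen b a ⊗ₜ[ℝ] ((⁅ξ, b a⁆, 0) : L × Module.Dual ℝ L)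
        = ∑ c, (b.dualBasis c ⁅ξ, b a⁆) •
            (Pgen b a ⊗ₜ[ℝ] ((b c, 0) : L × Module.Dual ℝ L)) := by
      intro a
      rw [expand_vec b ⁅ξ, b a⁆, TensorProduct.tmul_sum]
      exact Finset.sum_congr rfl fun c _ => (TensorProduct.tmul_smul _ _ _)
    have key : deltaCocomm b ((ξ, 0) : L × Module.Dual ℝ L)
        = (∑ a : ι, ∑ c : ι, (-(b.dualBasis a ⁅ξ, b c⁆)) •
            (((0, b.dualBasis c) : L × Module.Dual ℝ L) ⊗ₜ[ℝ] ((b a, 0) : L × Module.Dual ℝ L)))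
          + ∑ a : ι, ∑ c : ι, (b.dualBasis c ⁅ξ, b a⁆) •
            (((0, b.dualBasis a) : L × Module.Dual ℝ L) ⊗ₜ[ℝ] ((b c, 0) : L × Module.Dual ℝ L)) := by
      rw [deltaCocomm]
      congr 1
      · refine Finset.sum_congr rfl fun a _ => ?_
        rw [h1, e1]; rfl
      · refine Finset.sum_congr rfl fun a _ => ?_
        rw [h2, e2]; rfl
    rw [key, Finset.sum_comm (γ := ι) (s := Finset.univ) (t := Finset.univ)]
    rw [← Finset.sum_add_distrib]
    refine Finset.sum_eq_zero fun a _ => ?_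
    rw [← Finset.sum_add_distrib]
    refine Finset.sum_eq_zero fun c _ => ?_
    simp [neg_smul]
    module
  · intro α
    have h1 : ∀ a : ι, hBracket ((0, α) : L × Module.Dual ℝ L) (Pgen b a)
        = (0 : L × Module.Dual ℝ L) := by
      intro a; simp [hBracket, Pgen, coad]
    have h2 : ∀ a : ι, hBracket ((0, α) : L × Module.Dual ℝ L) (Jgen b a)
        = ((0, - coad (b a) α) : L × Module.Dual ℝ L) := by
      intro a; simp [hBracket, Jgen, coad]
    rw [deltaCocomm]
    rw [show (∑ a : ι, hBracket ((0, α) : L × Module.Dual ℝ L) (Pgen b a) ⊗ₜ[ℝ] Jgen b a) = 0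
      from Finset.sum_eq_zero fun a _ => by rw [h1, TensorProduct.zero_tmul], zero_add]
    refine Finset.sum_congr rfl fun i _ => ?_
    rw [h2, expand_dual b (- coad (b i) α), TensorProduct.tmul_sum]
    refine Finset.sum_congr rfl fun j _ => ?_
    rw [TensorProduct.tmul_smul]
    have : (- coad (b i) α) (b j) = α ⁅b i, b j⁆ := by simp [coad]
    rw [this]
    rfl
end

section
/- Fix n, g ∈ ℕ and elements u_{M₁},…,u_{Mₙ}, u_{A₁}, u_{B₁},…,u_{A_g}, u_{B_g} ∈ G, and set u_{K_i} = u_{B_i}u_{A_i}⁻¹u_{B_i}⁻¹u_{A_i}. For j = (j^{M₁},…,j^{Mₙ}, j^{A₁}, j^{B₁},…,j^{A_g}, j^{B_g}) ∈ V^{n+2g} set j^{H_i} = (Id − Ad*(u_{A_i}⁻¹u_{B_i}⁻¹u_{A_i})) j^{A_i} + (Ad*(u_{A_i}⁻¹u_{B_i}⁻¹u_{A_i}) − Ad*(u_{B_i}⁻¹u_{A_i})) j^{B_i}. Define K : V^{n+2g} → V^{n+2g}, K(j) = j′, by: j′^{M_i} = j^{M_i} − (Id − Ad*(u_{M_i}))[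 Σ_{k=i+1}^{n} Ad*(u_{M_{k−1}}⋯u_{M_{i+1}}) j^{M_k} + Σ_{k=1}^{g} Ad*(u_{K_{k−1}}⋯u_{K_1}·u_{Mₙ}⋯u_{M_{i+1}}) j^{H_k} ]; j′^{A_i} = j^{A_i} + Ad*(u_{A_i}⁻¹)(j^{A_i} − j^{B_i}) + (Ad*(u_{A_i}) − Ad*(u_{B_i}u_{A_i}⁻¹)) Σ_{k=i+1}^{g} Ad*(u_{K_{k−1}}⋯u_{K_{i+1}}) j^{H_k}; j′^{B_i} = j^{B_i} + Ad*(u_{A_i}⁻¹)(j^{A_i} − j^{B_i}) + (Ad*(u_{B_i}) − Ad*(u_{B_i}u_{A_i}⁻¹)) Σ_{k=i+1}^{g} Ad*(u_{K_{k−1}}⋯u_{K_{i+1}}) j^{H_k} (all empty products of group elements being the identity of G and empty sums being 0). Define K′ : V^{n+2g} → V^{n+2g}, K′(j′) = j, by: j^{M_i} = j′^{M_i} + (Id − Ad*(u_{M_i}))[ Σ_{k=i+1}^{n} j′^{M_k} + Σ_{k=1}^{g} ((Id − Ad*(u_{A_k}⁻¹)) j′^{A_k} + (Ad*(u_{A_k}⁻¹)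 − Ad*(u_{B_k}⁻¹u_{A_k})) j′^{B_k}) ]; j^{A_i} = j′^{A_i} − Ad*(u_{A_i}⁻¹)(j′^{A_i} − j′^{B_i}) + (Id − Ad*(u_{A_i})) Σ_{k=i+1}^{g} ((Id − Ad*(u_{A_k}⁻¹)) j′^{A_k} + (Ad*(u_{A_k}⁻¹) − Ad*(u_{B_k}⁻¹u_{A_k})) j′^{B_k}); j^{B_i} = j′^{B_i} − Ad*(u_{A_i}⁻¹)(j′^{A_i} − j′^{B_i}) + (Id − Ad*(u_{B_i})) Σ_{k=i+1}^{g} ((Id − Ad*(u_{A_k}⁻¹)) j′^{A_k} + (Ad*(u_{A_k}⁻¹) − Ad*(u_{B_k}⁻¹u_{A_k})) j′^{B_k}). Then K′ ∘ K = id and K ∘ K′ = id on V^{n+2g}; i.e. the decoupling transformation K is bijective with inverse K′. -/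
/-!
STATEMENT 5: The decoupling transformation `K : V^{n+2g} → V^{n+2g}` (given by the
explicit formulas of Def. 2.3 of the paper, with `Ad*(u) := π(u⁻¹)`) is bijective, with
inverse the explicitly given map `K′`; i.e. `K′ ∘ K = id` and `K ∘ K′ = id`.
Indices are 0-based here: the tuple `(j^{M_1},…,j^{M_n},j^{A_1},j^{B_1},…,j^{A_g},j^{B_g})`
is modelled as an element of `(Fin n → V) × (Fin g → V) × (Fin g → V)`, and the fixed
group elements `u_{M_i}, u_{A_i}, u_{B_i}` as functions `ℕ → G` (only the first `n`
resp. `g` values are ever used).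
-/

variable {G V : Type*} [Group G] [AddCommGroup V] [Module ℝ V]

/-- `Ad*(u) := π(u⁻¹)`. -/
def Ads (π : G →* (V ≃ₗ[ℝ] V)) (u : G) : V →ₗ[ℝ] V := (π u⁻¹ : V ≃ₗ[ℝ] V)

/-- The descending ordered product `f (hi-1) * f (hi-2) * ⋯ * f lo`
(the identity if `hi ≤ lo`). -/
def prodD (f : ℕ → G) (lo hi : ℕ) : G :=
  ((List.range (hi - lo)).map fun t => f (hi - 1 - t)).prod

/-- Extension of a finite tuple of vectors by `0`. -/
def extV {n : ℕ} (j : Fin n → V) : ℕ → V := fun k => if h : k < n then j ⟨k, h⟩ else 0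

/-- `u_{K_i} = u_{B_i} u_{A_i}⁻¹ u_{B_i}⁻¹ u_{A_i}`. -/
def uKel (uA uB : ℕ → G) (i : ℕ) : G := uB i * (uA i)⁻¹ * (uB i)⁻¹ * uA i

/-- `j^{H_i} = (Id − Ad*(u_{A_i}⁻¹u_{B_i}⁻¹u_{A_i})) j^{A_i}
      + (Ad*(u_{A_i}⁻¹u_{B_i}⁻¹u_{A_i}) − Ad*(u_{B_i}⁻¹u_{A_i})) j^{B_i}`. -/
def jHel (π : G →* (V ≃ₗ[ℝ] V)) (uA uB : ℕ → G) (jA jB : ℕ → V) (i : ℕ) : V :=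
  (jA i - Ads π ((uA i)⁻¹ * (uB i)⁻¹ * uA i) (jA i)) +
    (Ads π ((uA i)⁻¹ * (uB i)⁻¹ * uA i) (jB i) - Ads π ((uB i)⁻¹ * uA i) (jB i))

/-- The decoupling transformation `K`. -/
def Kmap (π : G →* (V ≃ₗ[ℝ] V)) (n g : ℕ) (uM uA uB : ℕ → G)
    (j : (Fin n → V) × (Fin g → V) × (Fin g → V)) :
    (Fin n → V) × (Fin g → V) × (Fin g → V) :=
  let jM : ℕ → V := extV j.1
  let jA : ℕ → V := extV j.2.1
  let jB : ℕ → V := extV j.2.2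
  let uK : ℕ → G := uKel uA uB
  let jH : ℕ → V := jHel π uA uB jA jB
  ( fun i =>
      let S : V :=
        (∑ k ∈ Finset.Ico ((i : ℕ) + 1) n, Ads π (prodD uM ((i : ℕ) + 1) k) (jM k)) +
          ∑ k ∈ Finset.range g,
            Ads π (prodD uK 0 k * prodD uM ((i : ℕ) + 1) n) (jH k)
      jM (i : ℕ) - (S - Ads π (uM (i : ℕ)) S),
    fun i =>
      let T : V :=
        ∑ k ∈ Finset.Ico ((i : ℕ) + 1) g, Ads π (prodD uK ((i : ℕ) + 1) k) (jH k)
      jA (i : ℕ) + Ads π (uA (i : ℕ))⁻¹ (jA (i : ℕ) - jB (i : ℕ)) +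
        (Ads π (uA (i : ℕ)) T - Ads π (uB (i : ℕ) * (uA (i : ℕ))⁻¹) T),
    fun i =>
      let T : V :=
        ∑ k ∈ Finset.Ico ((i : ℕ) + 1) g, Ads π (prodD uK ((i : ℕ) + 1) k) (jH k)
      jB (i : ℕ) + Ads π (uA (i : ℕ))⁻¹ (jA (i : ℕ) - jB (i : ℕ)) +
        (Ads π (uB (i : ℕ)) T - Ads π (uB (i : ℕ) * (uA (i : ℕ))⁻¹) T) )

/-- The handle/puncture summand
`(Id − Ad*(u_{A_k}⁻¹)) j′^{A_k} + (Ad*(u_{A_k}⁻¹) − Ad*(u_{B_k}⁻¹u_{A_k})) j′^{B_k}`. -/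
def Wel (π : G →* (V ≃ₗ[ℝ] V)) (uA uB : ℕ → G) (jA' jB' : ℕ → V) (k : ℕ) : V :=
  (jA' k - Ads π (uA k)⁻¹ (jA' k)) +
    (Ads π (uA k)⁻¹ (jB' k) - Ads π ((uB k)⁻¹ * uA k) (jB' k))

/-- The inverse decoupling transformation `K′`. -/
def Kmap' (π : G →* (V ≃ₗ[ℝ] V)) (n g : ℕ) (uM uA uB : ℕ → G)
    (j' : (Fin n → V) × (Fin g → V) × (Fin g → V)) :
    (Fin n → V) × (Fin g → V) × (Fin g → V) :=
  let jM' : ℕ → V := extV j'.1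
  let jA' : ℕ → V := extV j'.2.1
  let jB' : ℕ → V := extV j'.2.2
  let W : ℕ → V := Wel π uA uB jA' jB'
  ( fun i =>
      let S : V :=
        (∑ k ∈ Finset.Ico ((i : ℕ) + 1) n, jM' k) + ∑ k ∈ Finset.range g, W k
      jM' (i : ℕ) + (S - Ads π (uM (i : ℕ)) S),
    fun i =>
      let T : V := ∑ k ∈ Finset.Ico ((i : ℕ) + 1) g, W k
      jA' (i : ℕ) - Ads π (uA (i : ℕ))⁻¹ (jA' (i : ℕ) - jB' (i : ℕ)) +
        (T - Ads π (uA (i : ℕ)) T),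
    fun i =>
      let T : V := ∑ k ∈ Finset.Ico ((i : ℕ) + 1) g, W k
      jB' (i : ℕ) - Ads π (uA (i : ℕ))⁻¹ (jA' (i : ℕ) - jB' (i : ℕ)) +
        (T - Ads π (uB (i : ℕ)) T) )

set_option linter.unusedSectionVars false
set_option maxHeartbeats 1000000

section Aux
variable (π : G →* (V ≃ₗ[ℝ] V))

lemma Ads_apply_Ads (u v : G) (x : V) : Ads π u (Ads π v x) = Ads π (v * u) x := by
  simp [Ads, mul_inv_rev, map_mul]

lemma Ads_one (x : V) : Ads π 1 x = x := by simp [Ads]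

lemma prodD_self (f : ℕ → G) (i : ℕ) : prodD f i i = 1 := by simp [prodD]

lemma prodD_succ_top (f : ℕ → G) {lo hi : ℕ} (h : lo ≤ hi) :
    prodD f lo (hi + 1) = f hi * prodD f lo hi := by
  unfold prodD
  rw [show hi + 1 - lo = (hi - lo) + 1 by omega, List.range_succ_eq_map]
  simp only [List.map_cons, List.map_map, List.prod_cons, Nat.add_sub_cancel, Nat.sub_zero]
  congr 1
  apply congrArg
  apply List.map_congr_left
  intro t ht
  simp only [Function.comp]
  congr 1
  omega

lemma prodD_succ_bot (f : ℕ → G) {lo hi : ℕ} (h : lo < hi) :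
    prodD f lo hi = prodD f (lo + 1) hi * f lo := by
  unfold prodD
  rw [show hi - lo = (hi - (lo+1)) + 1 by omega, List.range_succ]
  rw [List.map_append, List.prod_append]
  congr 1
  simp only [List.map_cons, List.map_nil, List.prod_cons, List.prod_nil, mul_one]
  congr 1
  omega

lemma sum_Ico_telescope (F H : ℕ → V) {a b : ℕ} (hab : a ≤ b)
    (h : ∀ k, a ≤ k → k < b → H k = F k - F (k + 1)) :
    ∑ k ∈ Finset.Ico a b, H k = F a - F b := by
  induction b, hab using Nat.le_induction with
  | base => simp
  | succ b hb ih =>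
      rw [Finset.sum_Ico_succ_top hb, ih (fun k h1 h2 => h k h1 (by omega)),
        h b hb (by omega)]
      abel

end Aux

section Defs
variable (π : G →* (V ≃ₗ[ℝ] V))

def Pfun (n g : ℕ) (uM uA uB : ℕ → G) (jM jA jB : ℕ → V) (i : ℕ) : V :=
  (∑ k ∈ Finset.Ico i n, Ads π (prodD uM i k) (jM k)) +
    ∑ k ∈ Finset.range g, Ads π (prodD (uKel uA uB) 0 k * prodD uM i n)
      (jHel π uA uB jA jB k)

def Rfun (g : ℕ) (uA uB : ℕ → G) (jA jB : ℕ → V) (i : ℕ) : V :=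
  ∑ l ∈ Finset.Ico i g, Ads π (prodD (uKel uA uB) i l) (jHel π uA uB jA jB l)

def Wsum (g : ℕ) (uA uB : ℕ → G) (jA jB : ℕ → V) (i : ℕ) : V :=
  ∑ k ∈ Finset.Ico i g, Wel π uA uB jA jB k

def S'fun (n g : ℕ) (uA uB : ℕ → G) (jM jA jB : ℕ → V) (i : ℕ) : V :=
  (∑ k ∈ Finset.Ico i n, jM k) + Wsum π g uA uB jA jB 0

def KMn (n g : ℕ) (uM uA uB : ℕ → G) (jM jA jB : ℕ → V) (i : ℕ) : V :=
  jM i - (Pfun π n g uM uA uB jM jA jB (i+1)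
    - Ads π (uM i) (Pfun π n g uM uA uB jM jA jB (i+1)))

def KAn (g : ℕ) (uA uB : ℕ → G) (jA jB : ℕ → V) (i : ℕ) : V :=
  jA i + Ads π (uA i)⁻¹ (jA i - jB i) +
    (Ads π (uA i) (Rfun π g uA uB jA jB (i+1))
      - Ads π (uB i * (uA i)⁻¹) (Rfun π g uA uB jA jB (i+1)))

def KBn (g : ℕ) (uA uB : ℕ → G) (jA jB : ℕ → V) (i : ℕ) : V :=
  jB i + Ads π (uA i)⁻¹ (jA i - jB i) +
    (Ads π (uB i) (Rfun π g uA uB jA jB (i+1))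
      - Ads π (uB i * (uA i)⁻¹) (Rfun π g uA uB jA jB (i+1)))

def K'Mn (n g : ℕ) (uM uA uB : ℕ → G) (jM jA jB : ℕ → V) (i : ℕ) : V :=
  let S : V := (∑ k ∈ Finset.Ico (i+1) n, jM k) + ∑ k ∈ Finset.range g, Wel π uA uB jA jB k
  jM i + (S - Ads π (uM i) S)

def K'An (g : ℕ) (uA uB : ℕ → G) (jA jB : ℕ → V) (i : ℕ) : V :=
  jA i - Ads π (uA i)⁻¹ (jA i - jB i) +
    (Wsum π g uA uB jA jB (i+1) - Ads π (uA i) (Wsum π g uA uB jA jB (i+1)))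

def K'Bn (g : ℕ) (uA uB : ℕ → G) (jA jB : ℕ → V) (i : ℕ) : V :=
  jB i - Ads π (uA i)⁻¹ (jA i - jB i) +
    (Wsum π g uA uB jA jB (i+1) - Ads π (uB i) (Wsum π g uA uB jA jB (i+1)))

end Defs

section Main
variable (π : G →* (V ≃ₗ[ℝ] V)) (n g : ℕ) (uM uA uB : ℕ → G) (jM jA jB : ℕ → V)

lemma Ads_uK_Rfun {k : ℕ} (hk : k < g) :
    Ads π (uKel uA uB k) (Rfun π g uA uB jA jB (k+1)) =
      Rfun π g uA uB jA jB k - jHel π uA uB jA jB k := by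
  unfold Rfun
  rw [map_sum, Finset.sum_eq_sum_Ico_succ_bot hk, prodD_self, Ads_one, add_sub_cancel_left]
  refine Finset.sum_congr rfl fun l hl => ?_
  rw [Ads_apply_Ads, ← prodD_succ_bot _ (Finset.mem_Ico.mp hl).1]

lemma Wel_K (k : ℕ) :
    Wel π uA uB (fun t => KAn π g uA uB jA jB t) (fun t => KBn π g uA uB jA jB t) k =
      jHel π uA uB jA jB k +
        (Ads π (uKel uA uB k) (Rfun π g uA uB jA jB (k+1)) - Rfun π g uA uB jA jB (k+1)) := by
  simp only [Wel, KAn, KBn, jHel, uKel, map_add, map_sub, Ads_apply_Ads]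
  simp only [mul_assoc, mul_inv_cancel_left, inv_mul_cancel_left, mul_inv_cancel,
    inv_mul_cancel, mul_one, one_mul, Ads_one]
  abel

lemma Wel_K_eq {k : ℕ} (hk : k < g) :
    Wel π uA uB (fun t => KAn π g uA uB jA jB t) (fun t => KBn π g uA uB jA jB t) k =
      Rfun π g uA uB jA jB k - Rfun π g uA uB jA jB (k+1) := by
  rw [Wel_K, Ads_uK_Rfun π g uA uB jA jB hk]; abel

lemma sum_Wel_K {i : ℕ} (hi : i ≤ g) :
    ∑ k ∈ Finset.Ico i g,
        Wel π uA uB (fun t => KAn π g uA uB jA jB t) (fun t => KBn π g uA uB jA jB t) k =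
      Rfun π g uA uB jA jB i := by
  rw [sum_Ico_telescope (Rfun π g uA uB jA jB) _ hi
    (fun k _ h2 => Wel_K_eq π g uA uB jA jB h2)]
  simp [Rfun]

lemma Pfun_n : Pfun π n g uM uA uB jM jA jB n = Rfun π g uA uB jA jB 0 := by
  unfold Pfun Rfun
  rw [Finset.Ico_self, Finset.sum_empty, Finset.range_eq_Ico, zero_add]
  refine Finset.sum_congr rfl fun k _ => ?_
  rw [prodD_self, mul_one]

lemma Ads_uM_Pfun {k : ℕ} (hk : k < n) :
    Ads π (uM k) (Pfun π n g uM uA uB jM jA jB (k+1)) =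
      Pfun π n g uM uA uB jM jA jB k - jM k := by
  unfold Pfun
  rw [map_add, map_sum, map_sum,
    Finset.sum_eq_sum_Ico_succ_bot hk (fun l => Ads π (prodD uM k l) (jM l)),
    prodD_self, Ads_one]
  have h1 : ∀ l ∈ Finset.Ico (k+1) n,
      Ads π (uM k) (Ads π (prodD uM (k+1) l) (jM l)) = Ads π (prodD uM k l) (jM l) := by
    intro l hl
    rw [Ads_apply_Ads, ← prodD_succ_bot _ (Finset.mem_Ico.mp hl).1]
  have h2 : ∀ l ∈ Finset.range g,
      Ads π (uM k) (Ads π (prodD (uKel uA uB) 0 l * prodD uM (k+1) n)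
          (jHel π uA uB jA jB l)) =
        Ads π (prodD (uKel uA uB) 0 l * prodD uM k n) (jHel π uA uB jA jB l) := by
    intro l _
    rw [Ads_apply_Ads, mul_assoc, ← prodD_succ_bot _ hk]
  rw [Finset.sum_congr rfl h1, Finset.sum_congr rfl h2]
  abel

lemma KMn_eq {k : ℕ} (hk : k < n) :
    KMn π n g uM uA uB jM jA jB k =
      Pfun π n g uM uA uB jM jA jB k - Pfun π n g uM uA uB jM jA jB (k+1) := by
  unfold KMn
  rw [Ads_uM_Pfun π n g uM uA uB jM jA jB hk]
  abel

lemma sum_KMn {i : ℕ} (hi : i ≤ n) :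
    (∑ k ∈ Finset.Ico i n, KMn π n g uM uA uB jM jA jB k) + Rfun π g uA uB jA jB 0 =
      Pfun π n g uM uA uB jM jA jB i := by
  rw [sum_Ico_telescope (Pfun π n g uM uA uB jM jA jB) _ hi
    (fun k _ h2 => KMn_eq π n g uM uA uB jM jA jB h2),
    ← Pfun_n π n g uM uA uB jM jA jB]
  abel

lemma dir1_M {i : ℕ} (hi : i < n) :
    K'Mn π n g uM uA uB (fun t => KMn π n g uM uA uB jM jA jB t)
      (fun t => KAn π g uA uB jA jB t) (fun t => KBn π g uA uB jA jB t) i = jM i := by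
  unfold K'Mn
  rw [Finset.range_eq_Ico, sum_Wel_K π g uA uB jA jB (Nat.zero_le g),
    sum_KMn π n g uM uA uB jM jA jB (by omega)]
  simp only [KMn]
  abel

lemma dir1_A {i : ℕ} (hi : i < g) :
    K'An π g uA uB (fun t => KAn π g uA uB jA jB t) (fun t => KBn π g uA uB jA jB t) i
      = jA i := by
  unfold K'An Wsum
  rw [sum_Wel_K π g uA uB jA jB (by omega)]
  simp only [KAn, KBn, map_add, map_sub, Ads_apply_Ads]
  simp only [mul_assoc, mul_inv_cancel_left, inv_mul_cancel_left, mul_inv_cancel,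
    inv_mul_cancel, mul_one, one_mul, Ads_one]
  abel

lemma dir1_B {i : ℕ} (hi : i < g) :
    K'Bn π g uA uB (fun t => KAn π g uA uB jA jB t) (fun t => KBn π g uA uB jA jB t) i
      = jB i := by
  unfold K'Bn Wsum
  rw [sum_Wel_K π g uA uB jA jB (by omega)]
  simp only [KAn, KBn, map_add, map_sub, Ads_apply_Ads]
  simp only [mul_assoc, mul_inv_cancel_left, inv_mul_cancel_left, mul_inv_cancel,
    inv_mul_cancel, mul_one, one_mul, Ads_one]
  abel

/- Direction 2 -/

lemma Wsum_split {k : ℕ} (hk : k < g) :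
    Wsum π g uA uB jA jB k = Wel π uA uB jA jB k + Wsum π g uA uB jA jB (k+1) := by
  unfold Wsum
  exact Finset.sum_eq_sum_Ico_succ_bot hk _

lemma jHel_K' (k : ℕ) :
    jHel π uA uB (fun t => K'An π g uA uB jA jB t) (fun t => K'Bn π g uA uB jA jB t) k =
      Wel π uA uB jA jB k +
        (Wsum π g uA uB jA jB (k+1) - Ads π (uKel uA uB k) (Wsum π g uA uB jA jB (k+1))) := by
  simp only [jHel, K'An, K'Bn, Wel, uKel, map_add, map_sub, Ads_apply_Ads]
  simp only [mul_assoc, mul_inv_cancel_left, inv_mul_cancel_left, mul_inv_cancel,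
    inv_mul_cancel, mul_one, one_mul, Ads_one]
  abel

lemma sum_Ads_jHel_K' {i : ℕ} (hi : i ≤ g) :
    ∑ l ∈ Finset.Ico i g, Ads π (prodD (uKel uA uB) i l)
        (jHel π uA uB (fun t => K'An π g uA uB jA jB t) (fun t => K'Bn π g uA uB jA jB t) l) =
      Wsum π g uA uB jA jB i := by
  rw [sum_Ico_telescope (fun l => Ads π (prodD (uKel uA uB) i l) (Wsum π g uA uB jA jB l))
    _ hi ?step]
  · simp only [prodD_self, Ads_one]
    have : Wsum π g uA uB jA jB g = 0 := by simp [Wsum]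
    rw [this, map_zero, sub_zero]
  case step =>
    intro l h1 h2
    have hj : jHel π uA uB (fun t => K'An π g uA uB jA jB t)
        (fun t => K'Bn π g uA uB jA jB t) l =
        Wsum π g uA uB jA jB l - Ads π (uKel uA uB l) (Wsum π g uA uB jA jB (l+1)) := by
      rw [jHel_K' π g uA uB jA jB l, Wsum_split π g uA uB jA jB h2]
      abel
    rw [hj, map_sub, Ads_apply_Ads, ← prodD_succ_top _ h1]

lemma S'fun_split {k : ℕ} (hk : k < n) :
    S'fun π n g uA uB jM jA jB k = jM k + S'fun π n g uA uB jM jA jB (k+1) := by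
  unfold S'fun
  rw [Finset.sum_eq_sum_Ico_succ_bot hk]
  abel

lemma K'Mn_eq (k : ℕ) :
    K'Mn π n g uM uA uB jM jA jB k =
      jM k + (S'fun π n g uA uB jM jA jB (k+1)
        - Ads π (uM k) (S'fun π n g uA uB jM jA jB (k+1))) := by
  unfold K'Mn S'fun Wsum
  rw [Finset.range_eq_Ico]

lemma sum_Ads_K'Mn {i : ℕ} (hi : i ≤ n) :
    (∑ k ∈ Finset.Ico i n, Ads π (prodD uM i k) (K'Mn π n g uM uA uB jM jA jB k)) +
      ∑ k ∈ Finset.range g, Ads π (prodD (uKel uA uB) 0 k * prodD uM i n)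
        (jHel π uA uB (fun t => K'An π g uA uB jA jB t) (fun t => K'Bn π g uA uB jA jB t) k) =
      S'fun π n g uA uB jM jA jB i := by
  have h2 : ∑ k ∈ Finset.range g, Ads π (prodD (uKel uA uB) 0 k * prodD uM i n)
        (jHel π uA uB (fun t => K'An π g uA uB jA jB t) (fun t => K'Bn π g uA uB jA jB t) k) =
      Ads π (prodD uM i n) (Wsum π g uA uB jA jB 0) := by
    rw [← sum_Ads_jHel_K' π g uA uB jA jB (Nat.zero_le g), map_sum, Finset.range_eq_Ico]
    refine Finset.sum_congr rfl fun k _ => ?_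
    rw [Ads_apply_Ads]
  rw [h2, sum_Ico_telescope
    (fun k => Ads π (prodD uM i k) (S'fun π n g uA uB jM jA jB k)) _ hi ?step]
  · have hn : S'fun π n g uA uB jM jA jB n = Wsum π g uA uB jA jB 0 := by
      simp [S'fun]
    rw [prodD_self, Ads_one, hn]
    abel
  case step =>
    intro k h1 h2'
    have hk : K'Mn π n g uM uA uB jM jA jB k =
        S'fun π n g uA uB jM jA jB k - Ads π (uM k) (S'fun π n g uA uB jM jA jB (k+1)) := by
      rw [K'Mn_eq, S'fun_split π n g uA uB jM jA jB h2']
      abel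
    rw [hk, map_sub, Ads_apply_Ads, ← prodD_succ_top _ h1]

lemma dir2_M {i : ℕ} (hi : i < n) :
    KMn π n g uM uA uB (fun t => K'Mn π n g uM uA uB jM jA jB t)
      (fun t => K'An π g uA uB jA jB t) (fun t => K'Bn π g uA uB jA jB t) i = jM i := by
  unfold KMn Pfun
  rw [sum_Ads_K'Mn π n g uM uA uB jM jA jB (by omega)]
  beta_reduce
  rw [K'Mn_eq]
  abel

lemma dir2_A {i : ℕ} (hi : i < g) :
    KAn π g uA uB (fun t => K'An π g uA uB jA jB t) (fun t => K'Bn π g uA uB jA jB t) i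
      = jA i := by
  unfold KAn Rfun
  rw [sum_Ads_jHel_K' π g uA uB jA jB (by omega)]
  simp only [K'An, K'Bn, map_add, map_sub, Ads_apply_Ads]
  simp only [mul_assoc, mul_inv_cancel_left, inv_mul_cancel_left, mul_inv_cancel,
    inv_mul_cancel, mul_one, one_mul, Ads_one]
  abel

lemma dir2_B {i : ℕ} (hi : i < g) :
    KBn π g uA uB (fun t => K'An π g uA uB jA jB t) (fun t => K'Bn π g uA uB jA jB t) i
      = jB i := by
  unfold KBn Rfun
  rw [sum_Ads_jHel_K' π g uA uB jA jB (by omega)]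
  simp only [K'An, K'Bn, map_add, map_sub, Ads_apply_Ads]
  simp only [mul_assoc, mul_inv_cancel_left, inv_mul_cancel_left, mul_inv_cancel,
    inv_mul_cancel, mul_one, one_mul, Ads_one]
  abel

end Main

/-! Congruence lemmas -/

section Congr
variable (π : G →* (V ≃ₗ[ℝ] V)) (n g : ℕ) (uM uA uB : ℕ → G)
variable {jM jA jB jM2 jA2 jB2 : ℕ → V}

lemma jHel_congr {k : ℕ} (hA : jA k = jA2 k) (hB : jB k = jB2 k) :
    jHel π uA uB jA jB k = jHel π uA uB jA2 jB2 k := by simp [jHel, hA, hB]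

lemma Wel_congr {k : ℕ} (hA : jA k = jA2 k) (hB : jB k = jB2 k) :
    Wel π uA uB jA jB k = Wel π uA uB jA2 jB2 k := by simp [Wel, hA, hB]

lemma Rfun_congr (hA : ∀ k, k < g → jA k = jA2 k) (hB : ∀ k, k < g → jB k = jB2 k) (i : ℕ) :
    Rfun π g uA uB jA jB i = Rfun π g uA uB jA2 jB2 i := by
  unfold Rfun
  refine Finset.sum_congr rfl fun l hl => ?_
  rw [jHel_congr π uA uB (hA l (Finset.mem_Ico.mp hl).2) (hB l (Finset.mem_Ico.mp hl).2)]

lemma Wsum_congr (hA : ∀ k, k < g → jA k = jA2 k) (hB : ∀ k, k < g → jB k = jB2 k) (i : ℕ) :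
    Wsum π g uA uB jA jB i = Wsum π g uA uB jA2 jB2 i := by
  unfold Wsum
  refine Finset.sum_congr rfl fun l hl => ?_
  rw [Wel_congr π uA uB (hA l (Finset.mem_Ico.mp hl).2) (hB l (Finset.mem_Ico.mp hl).2)]

lemma Pfun_congr (hM : ∀ k, k < n → jM k = jM2 k) (hA : ∀ k, k < g → jA k = jA2 k)
    (hB : ∀ k, k < g → jB k = jB2 k) (i : ℕ) :
    Pfun π n g uM uA uB jM jA jB i = Pfun π n g uM uA uB jM2 jA2 jB2 i := by
  unfold Pfun
  congr 1
  · exact Finset.sum_congr rfl fun k hk => by rw [hM k (Finset.mem_Ico.mp hk).2]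
  · exact Finset.sum_congr rfl fun k hk => by
      rw [jHel_congr π uA uB (hA k (Finset.mem_range.mp hk)) (hB k (Finset.mem_range.mp hk))]

lemma KMn_congr (hM : ∀ k, k < n → jM k = jM2 k) (hA : ∀ k, k < g → jA k = jA2 k)
    (hB : ∀ k, k < g → jB k = jB2 k) {i : ℕ} (hi : i < n) :
    KMn π n g uM uA uB jM jA jB i = KMn π n g uM uA uB jM2 jA2 jB2 i := by
  unfold KMn
  rw [Pfun_congr π n g uM uA uB hM hA hB, hM i hi]

lemma KAn_congr (hA : ∀ k, k < g → jA k = jA2 k) (hB : ∀ k, k < g → jB k = jB2 k)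
    {i : ℕ} (hi : i < g) :
    KAn π g uA uB jA jB i = KAn π g uA uB jA2 jB2 i := by
  unfold KAn
  rw [Rfun_congr π g uA uB hA hB, hA i hi, hB i hi]

lemma KBn_congr (hA : ∀ k, k < g → jA k = jA2 k) (hB : ∀ k, k < g → jB k = jB2 k)
    {i : ℕ} (hi : i < g) :
    KBn π g uA uB jA jB i = KBn π g uA uB jA2 jB2 i := by
  unfold KBn
  rw [Rfun_congr π g uA uB hA hB, hA i hi, hB i hi]

lemma K'Mn_congr (hM : ∀ k, k < n → jM k = jM2 k) (hA : ∀ k, k < g → jA k = jA2 k)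
    (hB : ∀ k, k < g → jB k = jB2 k) {i : ℕ} (hi : i < n) :
    K'Mn π n g uM uA uB jM jA jB i = K'Mn π n g uM uA uB jM2 jA2 jB2 i := by
  simp only [K'Mn]
  have h1 : (∑ k ∈ Finset.Ico (i+1) n, jM k) = ∑ k ∈ Finset.Ico (i+1) n, jM2 k :=
    Finset.sum_congr rfl fun k hk => hM k (Finset.mem_Ico.mp hk).2
  have h2 : (∑ k ∈ Finset.range g, Wel π uA uB jA jB k) =
      ∑ k ∈ Finset.range g, Wel π uA uB jA2 jB2 k :=
    Finset.sum_congr rfl fun k hk =>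
      Wel_congr π uA uB (hA k (Finset.mem_range.mp hk)) (hB k (Finset.mem_range.mp hk))
  rw [h1, h2, hM i hi]

lemma K'An_congr (hA : ∀ k, k < g → jA k = jA2 k) (hB : ∀ k, k < g → jB k = jB2 k)
    {i : ℕ} (hi : i < g) :
    K'An π g uA uB jA jB i = K'An π g uA uB jA2 jB2 i := by
  unfold K'An
  rw [Wsum_congr π g uA uB hA hB, hA i hi, hB i hi]

lemma K'Bn_congr (hA : ∀ k, k < g → jA k = jA2 k) (hB : ∀ k, k < g → jB k = jB2 k)
    {i : ℕ} (hi : i < g) :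
    K'Bn π g uA uB jA jB i = K'Bn π g uA uB jA2 jB2 i := by
  unfold K'Bn
  rw [Wsum_congr π g uA uB hA hB, hA i hi, hB i hi]

end Congr

lemma extV_lt {m : ℕ} (f : Fin m → V) {k : ℕ} (hk : k < m) : extV f k = f ⟨k, hk⟩ := by
  simp [extV, hk]

section Bridge
variable (π : G →* (V ≃ₗ[ℝ] V)) (n g : ℕ) (uM uA uB : ℕ → G)
variable (j : (Fin n → V) × (Fin g → V) × (Fin g → V))

lemma Kmap_fst (i : Fin n) :
    (Kmap π n g uM uA uB j).1 i =
      KMn π n g uM uA uB (extV j.1) (extV j.2.1) (extV j.2.2) (i : ℕ) := rfl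

lemma Kmap_snd1 (i : Fin g) :
    (Kmap π n g uM uA uB j).2.1 i =
      KAn π g uA uB (extV j.2.1) (extV j.2.2) (i : ℕ) := rfl

lemma Kmap_snd2 (i : Fin g) :
    (Kmap π n g uM uA uB j).2.2 i =
      KBn π g uA uB (extV j.2.1) (extV j.2.2) (i : ℕ) := rfl

lemma Kmap'_fst (i : Fin n) :
    (Kmap' π n g uM uA uB j).1 i =
      K'Mn π n g uM uA uB (extV j.1) (extV j.2.1) (extV j.2.2) (i : ℕ) := rfl

lemma Kmap'_snd1 (i : Fin g) :
    (Kmap' π n g uM uA uB j).2.1 i =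
      K'An π g uA uB (extV j.2.1) (extV j.2.2) (i : ℕ) := rfl

lemma Kmap'_snd2 (i : Fin g) :
    (Kmap' π n g uM uA uB j).2.2 i =
      K'Bn π g uA uB (extV j.2.1) (extV j.2.2) (i : ℕ) := rfl

end Bridge

theorem decoupling_bijective (π : G →* (V ≃ₗ[ℝ] V)) (n g : ℕ) (uM uA uB : ℕ → G) :
    ∀ j : (Fin n → V) × (Fin g → V) × (Fin g → V),
      Kmap' π n g uM uA uB (Kmap π n g uM uA uB j) = j ∧
      Kmap π n g uM uA uB (Kmap' π n g uM uA uB j) = j := by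
  intro j
  obtain ⟨jM0, jA0, jB0⟩ := j
  constructor
  · -- K' ∘ K = id
    have hM : ∀ k, k < n → extV (Kmap π n g uM uA uB (jM0, jA0, jB0)).1 k =
        KMn π n g uM uA uB (extV jM0) (extV jA0) (extV jB0) k := by
      intro k hk; rw [extV_lt _ hk]; rfl
    have hA : ∀ k, k < g → extV (Kmap π n g uM uA uB (jM0, jA0, jB0)).2.1 k =
        KAn π g uA uB (extV jA0) (extV jB0) k := by
      intro k hk; rw [extV_lt _ hk]; rfl
    have hB : ∀ k, k < g → extV (Kmap π n g uM uA uB (jM0, jA0, jB0)).2.2 k =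
        KBn π g uA uB (extV jA0) (extV jB0) k := by
      intro k hk; rw [extV_lt _ hk]; rfl
    refine Prod.ext ?_ (Prod.ext ?_ ?_) <;> funext i
    · calc (Kmap' π n g uM uA uB (Kmap π n g uM uA uB (jM0, jA0, jB0))).1 i
          = K'Mn π n g uM uA uB (extV (Kmap π n g uM uA uB (jM0, jA0, jB0)).1)
              (extV (Kmap π n g uM uA uB (jM0, jA0, jB0)).2.1)
              (extV (Kmap π n g uM uA uB (jM0, jA0, jB0)).2.2) (i : ℕ) := rfl
        _ = K'Mn π n g uM uA uB
              (fun t => KMn π n g uM uA uB (extV jM0) (extV jA0) (extV jB0) t)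
              (fun t => KAn π g uA uB (extV jA0) (extV jB0) t)
              (fun t => KBn π g uA uB (extV jA0) (extV jB0) t) (i : ℕ) :=
            K'Mn_congr π n g uM uA uB hM hA hB i.isLt
        _ = extV jM0 (i : ℕ) :=
            dir1_M π n g uM uA uB (extV jM0) (extV jA0) (extV jB0) i.isLt
        _ = jM0 i := by rw [extV_lt _ i.isLt]
    · calc (Kmap' π n g uM uA uB (Kmap π n g uM uA uB (jM0, jA0, jB0))).2.1 i
          = K'An π g uA uB (extV (Kmap π n g uM uA uB (jM0, jA0, jB0)).2.1)
              (extV (Kmap π n g uM uA uB (jM0, jA0, jB0)).2.2) (i : ℕ) := rfl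
        _ = K'An π g uA uB
              (fun t => KAn π g uA uB (extV jA0) (extV jB0) t)
              (fun t => KBn π g uA uB (extV jA0) (extV jB0) t) (i : ℕ) :=
            K'An_congr π g uA uB hA hB i.isLt
        _ = extV jA0 (i : ℕ) := dir1_A π g uA uB (extV jA0) (extV jB0) i.isLt
        _ = jA0 i := by rw [extV_lt _ i.isLt]
    · calc (Kmap' π n g uM uA uB (Kmap π n g uM uA uB (jM0, jA0, jB0))).2.2 i
          = K'Bn π g uA uB (extV (Kmap π n g uM uA uB (jM0, jA0, jB0)).2.1)
              (extV (Kmap π n g uM uA uB (jM0, jA0, jB0)).2.2) (i : ℕ) := rfl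
        _ = K'Bn π g uA uB
              (fun t => KAn π g uA uB (extV jA0) (extV jB0) t)
              (fun t => KBn π g uA uB (extV jA0) (extV jB0) t) (i : ℕ) :=
            K'Bn_congr π g uA uB hA hB i.isLt
        _ = extV jB0 (i : ℕ) := dir1_B π g uA uB (extV jA0) (extV jB0) i.isLt
        _ = jB0 i := by rw [extV_lt _ i.isLt]
  · -- K ∘ K' = id
    have hM : ∀ k, k < n → extV (Kmap' π n g uM uA uB (jM0, jA0, jB0)).1 k =
        K'Mn π n g uM uA uB (extV jM0) (extV jA0) (extV jB0) k := by
      intro k hk; rw [extV_lt _ hk]; rfl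
    have hA : ∀ k, k < g → extV (Kmap' π n g uM uA uB (jM0, jA0, jB0)).2.1 k =
        K'An π g uA uB (extV jA0) (extV jB0) k := by
      intro k hk; rw [extV_lt _ hk]; rfl
    have hB : ∀ k, k < g → extV (Kmap' π n g uM uA uB (jM0, jA0, jB0)).2.2 k =
        K'Bn π g uA uB (extV jA0) (extV jB0) k := by
      intro k hk; rw [extV_lt _ hk]; rfl
    refine Prod.ext ?_ (Prod.ext ?_ ?_) <;> funext i
    · calc (Kmap π n g uM uA uB (Kmap' π n g uM uA uB (jM0, jA0, jB0))).1 i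
          = KMn π n g uM uA uB (extV (Kmap' π n g uM uA uB (jM0, jA0, jB0)).1)
              (extV (Kmap' π n g uM uA uB (jM0, jA0, jB0)).2.1)
              (extV (Kmap' π n g uM uA uB (jM0, jA0, jB0)).2.2) (i : ℕ) := rfl
        _ = KMn π n g uM uA uB
              (fun t => K'Mn π n g uM uA uB (extV jM0) (extV jA0) (extV jB0) t)
              (fun t => K'An π g uA uB (extV jA0) (extV jB0) t)
              (fun t => K'Bn π g uA uB (extV jA0) (extV jB0) t) (i : ℕ) :=
            KMn_congr π n g uM uA uB hM hA hB i.isLt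
        _ = extV jM0 (i : ℕ) :=
            dir2_M π n g uM uA uB (extV jM0) (extV jA0) (extV jB0) i.isLt
        _ = jM0 i := by rw [extV_lt _ i.isLt]
    · calc (Kmap π n g uM uA uB (Kmap' π n g uM uA uB (jM0, jA0, jB0))).2.1 i
          = KAn π g uA uB (extV (Kmap' π n g uM uA uB (jM0, jA0, jB0)).2.1)
              (extV (Kmap' π n g uM uA uB (jM0, jA0, jB0)).2.2) (i : ℕ) := rfl
        _ = KAn π g uA uB
              (fun t => K'An π g uA uB (extV jA0) (extV jB0) t)
              (fun t => K'Bn π g uA uB (extV jA0) (extV jB0) t) (i : ℕ) :=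
            KAn_congr π g uA uB hA hB i.isLt
        _ = extV jA0 (i : ℕ) := dir2_A π g uA uB (extV jA0) (extV jB0) i.isLt
        _ = jA0 i := by rw [extV_lt _ i.isLt]
    · calc (Kmap π n g uM uA uB (Kmap' π n g uM uA uB (jM0, jA0, jB0))).2.2 i
          = KBn π g uA uB (extV (Kmap' π n g uM uA uB (jM0, jA0, jB0)).2.1)
              (extV (Kmap' π n g uM uA uB (jM0, jA0, jB0)).2.2) (i : ℕ) := rfl
        _ = KBn π g uA uB
              (fun t => K'An π g uA uB (extV jA0) (extV jB0) t)
              (fun t => K'Bn π g uA uB (extV jA0) (extV jB0) t) (i : ℕ) :=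
            KBn_congr π g uA uB hA hB i.isLt
        _ = extV jB0 (i : ℕ) := dir2_B π g uA uB (extV jA0) (extV jB0) i.isLt
        _ = jB0 i := by rw [extV_lt _ i.isLt]
end

section
/- Fix n, g ∈ ℕ and, for X ∈ {M₁,…,Mₙ, A₁, B₁,…,A_g, B_g}, elements u_X ∈ G and j_X ∈ V, and let X = (u_X, −Ad*(u_X⁻¹) j_X) ∈ H. Then the product [B_g, A_g⁻¹]⋯[B_1, A_1⁻¹]·Mₙ⋯M₁ in H, where [B,A⁻¹] := B·A⁻¹·B⁻¹·A, equals (u_tot, −Ad*(u_tot⁻¹) j_tot), where u_{K_i} = u_{B_i}u_{A_i}⁻¹u_{B_i}⁻¹u_{A_i}, u_tot = u_{K_g}⋯u_{K_1}·u_{Mₙ}⋯u_{M₁}, j^{H_i} = (Id − Ad*(u_{A_i}⁻¹u_{B_i}⁻¹u_{A_i})) j_{A_i} + (Ad*(u_{A_i}⁻¹u_{B_i}⁻¹u_{A_i}) − Ad*(u_{B_i}⁻¹u_{A_i})) j_{B_i}, and j_tot = Σ_{i=1}^{n} Ad*(u_{M_{i−1}}⋯u_{M₁}) j_{M_i} +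 Σ_{i=1}^{g} Ad*(u_{K_{i−1}}⋯u_{K_1}·u_{Mₙ}⋯u_{M₁}) j^{H_i} (empty products of group elements being the identity of G). -/
/-!
STATEMENT 6: With holonomies `X = (u_X, −Ad*(u_X⁻¹) j_X) ∈ H = G ⋉ V`, the product
`[B_g,A_g⁻¹]⋯[B_1,A_1⁻¹]·M_n⋯M_1` (with `[B,A⁻¹] := B·A⁻¹·B⁻¹·A`) equals
`(u_tot, −Ad*(u_tot⁻¹) j_tot)` with `u_tot` and `j_tot` given by the explicit formulas
of the paper.  Indices are 0-based; empty products of group elements are the identity.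
-/

variable {G V : Type*} [Group G] [AddCommGroup V] [Module ℝ V]

/-- Multiplication of `H = G ⋉ V` : `(u₁,a₁)·(u₂,a₂) = (u₁u₂, a₁ + Ad*(u₁⁻¹)a₂)`. -/
def Hmul (π : G →* (V ≃ₗ[ℝ] V)) (p q : G × V) : G × V :=
  (p.1 * q.1, p.2 + Ads π p.1⁻¹ q.2)

/-- Inversion in `H = G ⋉ V`. -/
def Hinv (π : G →* (V ≃ₗ[ℝ] V)) (p : G × V) : G × V :=
  (p.1⁻¹, - Ads π p.1 p.2)

/-- The group commutator `[B, A⁻¹] = B·A⁻¹·B⁻¹·A` in `H`. -/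
def Hcomm (π : G →* (V ≃ₗ[ℝ] V)) (B A : G × V) : G × V :=
  Hmul π (Hmul π (Hmul π B (Hinv π A)) (Hinv π B)) A

/-- The ordered product of a list of elements of `H` (left to right). -/
def Hprod (π : G →* (V ≃ₗ[ℝ] V)) (l : List (G × V)) : G × V :=
  l.foldr (Hmul π) (1, 0)

section Aux
variable (π : G →* (V ≃ₗ[ℝ] V))

lemma Ads_Ads (a b : G) (x : V) : Ads π a (Ads π b x) = Ads π (b * a) x := by
  simp [Ads, mul_inv_rev, map_mul]

lemma Hmul_canon (u w : G) (j s : V) :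
    Hmul π (u, - Ads π u⁻¹ j) (w, - Ads π w⁻¹ s)
      = (u * w, - Ads π (u * w)⁻¹ (Ads π w j + s)) := by
  unfold Hmul
  refine Prod.ext rfl ?_
  simp only [map_neg, map_add, Ads_Ads]
  simp only [mul_inv_rev, mul_inv_cancel_left]
  abel

lemma Hinv_canon (u : G) (j : V) :
    Hinv π (u, - Ads π u⁻¹ j) = (u⁻¹, - Ads π u⁻¹⁻¹ (- Ads π u⁻¹ j)) := by
  unfold Hinv
  refine Prod.ext rfl ?_
  simp [Ads_Ads]

lemma Hcomm_canon (b a : G) (jb ja : V) :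
    Hcomm π (b, - Ads π b⁻¹ jb) (a, - Ads π a⁻¹ ja)
      = (b * a⁻¹ * b⁻¹ * a,
         - Ads π (b * a⁻¹ * b⁻¹ * a)⁻¹
            ((ja - Ads π (a⁻¹ * b⁻¹ * a) ja) +
              (Ads π (a⁻¹ * b⁻¹ * a) (jb) - Ads π (b⁻¹ * a) (jb)))) := by
  unfold Hcomm
  rw [Hinv_canon, Hinv_canon, Hmul_canon, Hmul_canon, Hmul_canon]
  refine Prod.ext rfl ?_
  rw [neg_inj]
  congr 1
  simp only [map_add, map_neg, map_sub, Ads_Ads]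
  abel

lemma range_map_succ {α : Type*} (F : ℕ → α) (k : ℕ) :
    (List.range (k+1)).map (fun t => F (k + 1 - 1 - t))
      = F k :: (List.range k).map (fun t => F (k - 1 - t)) := by
  rw [List.range_succ_eq_map, List.map_cons, List.map_map]
  refine congrArg₂ List.cons (by congr 1) ?_
  refine List.map_congr_left fun t ht => ?_
  simp only [Function.comp_apply]
  congr 1
  omega

lemma prodD_succ (f : ℕ → G) (k : ℕ) : prodD f 0 (k+1) = f k * prodD f 0 k := by
  unfold prodD
  rw [Nat.sub_zero, Nat.sub_zero, range_map_succ f k, List.prod_cons]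

lemma Hprod_canon_append (u : ℕ → G) (j : ℕ → V) (w : G) (s : V) (l : List (G × V))
    (hl : Hprod π l = (w, - Ads π w⁻¹ s)) (k : ℕ) :
    Hprod π (((List.range k).map fun t =>
        (u (k-1-t), - Ads π (u (k-1-t))⁻¹ (j (k-1-t)))) ++ l)
      = (prodD u 0 k * w,
         - Ads π (prodD u 0 k * w)⁻¹
            (s + ∑ i ∈ Finset.range k, Ads π (prodD u 0 i * w) (j i))) := by
  induction k with
  | zero => simpa [prodD, Hprod] using hl
  | succ k ih =>
    rw [range_map_succ (fun i => (u i, - Ads π (u i)⁻¹ (j i))) k, List.cons_append]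
    have : Hprod π ((u k, - Ads π (u k)⁻¹ (j k)) ::
        (((List.range k).map fun t => (u (k-1-t), - Ads π (u (k-1-t))⁻¹ (j (k-1-t)))) ++ l))
      = Hmul π (u k, - Ads π (u k)⁻¹ (j k))
          (Hprod π (((List.range k).map fun t =>
            (u (k-1-t), - Ads π (u (k-1-t))⁻¹ (j (k-1-t)))) ++ l)) := rfl
    rw [this, ih, Hmul_canon, prodD_succ, Finset.sum_range_succ, mul_assoc]
    refine Prod.ext rfl ?_
    rw [neg_inj]
    congr 1
    abel

end Aux

theorem total_holonomy (π : G →* (V ≃ₗ[ℝ] V)) (n g : ℕ)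
    (uM uA uB : ℕ → G) (jM jA jB : ℕ → V) :
    Hprod π
      (((List.range g).map fun t =>
          Hcomm π (uB (g - 1 - t), - Ads π (uB (g - 1 - t))⁻¹ (jB (g - 1 - t)))
            (uA (g - 1 - t), - Ads π (uA (g - 1 - t))⁻¹ (jA (g - 1 - t)))) ++
        ((List.range n).map fun t =>
          (uM (n - 1 - t), - Ads π (uM (n - 1 - t))⁻¹ (jM (n - 1 - t)))))
    = (prodD (uKel uA uB) 0 g * prodD uM 0 n,
        - Ads π (prodD (uKel uA uB) 0 g * prodD uM 0 n)⁻¹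
          ((∑ i ∈ Finset.range n, Ads π (prodD uM 0 i) (jM i)) +
            ∑ i ∈ Finset.range g,
              Ads π (prodD (uKel uA uB) 0 i * prodD uM 0 n)
                (jHel π uA uB jA jB i))) := by
  have hM : Hprod π ((List.range n).map fun t =>
      (uM (n - 1 - t), - Ads π (uM (n - 1 - t))⁻¹ (jM (n - 1 - t))))
      = (prodD uM 0 n,
         - Ads π (prodD uM 0 n)⁻¹ (∑ i ∈ Finset.range n, Ads π (prodD uM 0 i) (jM i))) := by
    have h0 : Hprod π ([] : List (G × V)) = ((1 : G), - Ads π (1:G)⁻¹ (0 : V)) := by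
      simp [Hprod]
    have := Hprod_canon_append π uM jM 1 0 [] h0 n
    simpa using this
  have hfun : (fun t => Hcomm π (uB (g - 1 - t), - Ads π (uB (g - 1 - t))⁻¹ (jB (g - 1 - t)))
        (uA (g - 1 - t), - Ads π (uA (g - 1 - t))⁻¹ (jA (g - 1 - t))))
      = fun t => (uKel uA uB (g - 1 - t),
          - Ads π (uKel uA uB (g - 1 - t))⁻¹ (jHel π uA uB jA jB (g - 1 - t))) := by
    funext t
    rw [Hcomm_canon]
    rfl
  rw [hfun]
  exact Hprod_canon_append π (uKel uA uB) (jHel π uA uB jA jB) (prodD uM 0 n) _ _ hM g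
end

section
/- Let ħ be a nonzero real number and W a complex vector space. For (h,f) ∈ G × C∞(G,ℝ) define the operator Γ(h,f) on the space of all functions Ψ : G^{n+2g} → W by (Γ(h,f)Ψ)(p) = exp(i f(Φ∞(β(p)))/ħ) · Ψ(Ãd_{h⁻¹}(p)). Then Γ(e,0) is the identity and Γ((h₁,f₁)·(h₂,f₂)) = Γ(h₁,f₁) ∘ Γ(h₂,f₂) for all (h₁,f₁), (h₂,f₂), where the product is taken in G ⋉ C∞(G); i.e. Γ is a representation of the group G ⋉ C∞(G) on the space of W-valued functions on G^{n+2g}. -/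
/-!
STATEMENT 9: For hbar ≠ 0 and a complex vector space `W`, the operators
`(Γ(h,f)Ψ)(p) = exp(i f(Φ∞(β(p)))/hbar) · Ψ(Ãd_{h⁻¹}(p))` on `W`-valued functions on
`G^{n+2g}` define a representation of the group `G ⋉ C∞(G)`:
`Γ(e,0) = id` and `Γ((h₁,f₁)·(h₂,f₂)) = Γ(h₁,f₁) ∘ Γ(h₂,f₂)`, where
`(h₁,f₁)·(h₂,f₂) = (h₁h₂, f₁ + f₂∘Ad_{h₁⁻¹})`.
-/

open scoped Manifold

variable {G : Type*} [Group G]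

/-- Extension of a finite tuple of group elements by `1`. -/
def extG {n : ℕ} (u : Fin n → G) : ℕ → G := fun k => if h : k < n then u ⟨k, h⟩ else 1

/-- `Φ∞(u_{M_1},…,u_{B_g}) = u_{K_g}⋯u_{K_1}·u_{M_n}⋯u_{M_1}`. -/
def PhiInfty {n g : ℕ} (p : (Fin n → G) × (Fin g → G) × (Fin g → G)) : G :=
  prodD (uKel (extG p.2.1) (extG p.2.2)) 0 g * prodD (extG p.1) 0 n

/-- `β` conjugates the puncture components into the fixed conjugacy classes. -/
def betaMap {n g : ℕ} (gmu : Fin n → G) (p : (Fin n → G) × (Fin g → G) × (Fin g → G)) :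
    (Fin n → G) × (Fin g → G) × (Fin g → G) :=
  (fun i => p.1 i * gmu i * (p.1 i)⁻¹, p.2.1, p.2.2)

/-- `Ãd_{h⁻¹}` : left translation on the puncture components, conjugation on the
handle components. -/
def adT {n g : ℕ} (h : G) (p : (Fin n → G) × (Fin g → G) × (Fin g → G)) :
    (Fin n → G) × (Fin g → G) × (Fin g → G) :=
  (fun i => h⁻¹ * p.1 i, fun i => h⁻¹ * p.2.1 i * h, fun i => h⁻¹ * p.2.2 i * h)

/-- `(Γ(h,f)Ψ)(p) = exp(i f(Φ∞(β(p)))/hbar) • Ψ(Ãd_{h⁻¹}(p))`. -/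
noncomputable def Gamma {n g : ℕ} {W : Type*} [AddCommGroup W] [Module ℂ W]
    (gmu : Fin n → G) (hbar : ℝ) (h : G) (f : G → ℝ)
    (Ψ : (Fin n → G) × (Fin g → G) × (Fin g → G) → W) :
    (Fin n → G) × (Fin g → G) × (Fin g → G) → W :=
  fun p => Complex.exp (Complex.I * (f (PhiInfty (betaMap gmu p)) : ℂ) / (hbar : ℂ)) •
    Ψ (adT h p)

lemma conj_list_prod (h : G) (l : List G) :
    (l.map fun x => h⁻¹ * x * h).prod = h⁻¹ * l.prod * h := by
  induction l with
  | nil => simp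
  | cons a t ih => simp [ih]; group

lemma prodD_conj (h : G) (f : ℕ → G) (lo hi : ℕ) :
    prodD (fun k => h⁻¹ * f k * h) lo hi = h⁻¹ * prodD f lo hi * h := by
  unfold prodD
  rw [← conj_list_prod h, List.map_map]
  rfl

lemma extG_conj {n : ℕ} (h : G) (u : Fin n → G) :
    extG (fun i => h⁻¹ * u i * h) = fun k => h⁻¹ * extG u k * h := by
  funext k
  unfold extG
  split <;> simp

lemma uKel_conj (h : G) (uA uB : ℕ → G) (i : ℕ) :
    uKel (fun k => h⁻¹ * uA k * h) (fun k => h⁻¹ * uB k * h) i =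
      h⁻¹ * uKel uA uB i * h := by
  unfold uKel; group

lemma PhiInfty_beta_adT {n g : ℕ} (gmu : Fin n → G) (h : G)
    (p : (Fin n → G) × (Fin g → G) × (Fin g → G)) :
    PhiInfty (betaMap gmu (adT h p)) = h⁻¹ * PhiInfty (betaMap gmu p) * h := by
  unfold PhiInfty betaMap adT
  simp only
  have h1 : (extG fun i => h⁻¹ * p.1 i * gmu i * (h⁻¹ * p.1 i)⁻¹) =
      fun k => h⁻¹ * extG (fun i => p.1 i * gmu i * (p.1 i)⁻¹) k * h := by
    rw [← extG_conj h (fun i => p.1 i * gmu i * (p.1 i)⁻¹)]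
    congr 1; funext i; group
  have h2 : (uKel (extG fun i => h⁻¹ * p.2.1 i * h) (extG fun i => h⁻¹ * p.2.2 i * h)) =
      fun i => h⁻¹ * uKel (extG p.2.1) (extG p.2.2) i * h := by
    funext i
    rw [extG_conj, extG_conj, uKel_conj]
  rw [h1, h2, prodD_conj, prodD_conj]
  group

lemma adT_mul {n g : ℕ} (h₁ h₂ : G) (p : (Fin n → G) × (Fin g → G) × (Fin g → G)) :
    adT (n := n) (g := g) (h₁ * h₂) p = adT h₂ (adT h₁ p) := by
  unfold adT
  refine Prod.ext ?_ (Prod.ext ?_ ?_) <;> funext i <;> simp <;> group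

theorem Gamma_representation
    {E : Type*} [NormedAddCommGroup E] [NormedSpace ℝ E]
    {HM : Type*} [TopologicalSpace HM] (I : ModelWithCorners ℝ E HM)
    [TopologicalSpace G] [ChartedSpace HM G] [LieGroup I (⊤ : ℕ∞) G]
    {W : Type*} [AddCommGroup W] [Module ℂ W]
    {n g : ℕ} (gmu : Fin n → G) (hbar : ℝ) (hhbar : hbar ≠ 0) :
    (∀ Ψ : (Fin n → G) × (Fin g → G) × (Fin g → G) → W,
        Gamma gmu hbar (1 : G) (0 : G → ℝ) Ψ = Ψ) ∧
    (∀ (h₁ h₂ : G) (f₁ f₂ : G → ℝ),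
        ContMDiff I 𝓘(ℝ, ℝ) (⊤ : ℕ∞) f₁ → ContMDiff I 𝓘(ℝ, ℝ) (⊤ : ℕ∞) f₂ →
        ∀ Ψ : (Fin n → G) × (Fin g → G) × (Fin g → G) → W,
          Gamma gmu hbar (h₁ * h₂) (f₁ + fun x => f₂ (h₁⁻¹ * x * h₁)) Ψ =
            Gamma gmu hbar h₁ f₁ (Gamma gmu hbar h₂ f₂ Ψ)) := by
  constructor
  · intro Ψ
    funext p
    unfold Gamma
    have : adT (n := n) (g := g) 1 p = p := by
      unfold adT
      refine Prod.ext ?_ (Prod.ext ?_ ?_) <;> funext i <;> simp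
    simp [this]
  · intro h₁ h₂ f₁ f₂ _ _ Ψ
    funext p
    unfold Gamma
    rw [adT_mul, PhiInfty_beta_adT]
    rw [smul_smul, ← Complex.exp_add]
    congr 2
    simp only [Pi.add_apply]
    push_cast
    ring
end

section
/- Fix g_μ ∈ E and a complex Banach space W, and for F ∈ C₀(E×E,ℂ) and continuous ψ : E → W define (π(F)ψ)(v) = ∫_E F(z, v.g_μ) ψ(z⁻¹v) dz. Then π(F)ψ is a well-defined continuous function E → W, and π is multiplicative: π(F₁ • F₂)ψ = π(F₁)(π(F₂)ψ) for all F₁, F₂ ∈ C₀(E×E,ℂ) and all continuous ψ : E → W. -/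
/-!
STATEMENT 15: Fix `g_μ ∈ E` and a complex Banach space `W`, and for `F ∈ C₀(E×E,ℂ)` and
continuous `ψ : E → W` define `(π(F)ψ)(v) = ∫_E F(z, v.g_μ) ψ(z⁻¹v) dz`.  Then `π(F)ψ`
is a well-defined continuous function `E → W`, and `π` is multiplicative:
`π(F₁ • F₂)ψ = π(F₁)(π(F₂)ψ)`.
-/

open MeasureTheory Pointwise

variable {E : Type*} [Group E] [TopologicalSpace E] [IsTopologicalGroup E]
  [LocallyCompactSpace E] [SecondCountableTopology E] [T2Space E]
  [MeasurableSpace E] [BorelSpace E]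

/-- The convolution product of the transformation group algebra:
`(F₁ • F₂)(v,u) = ∫_E F₁(z,u) F₂(z⁻¹v, z⁻¹.u) dz`. -/
noncomputable def convOp (μ : Measure E) (act : E → E → E) (F₁ F₂ : E × E → ℂ) :
    E × E → ℂ :=
  fun q => ∫ z, F₁ (z, q.2) * F₂ (z⁻¹ * q.1, act z⁻¹ q.2) ∂μ

/-- The representation `(π(F)ψ)(v) = ∫_E F(z, v.g_μ) ψ(z⁻¹v) dz`. -/
noncomputable def piOp {W : Type*} [NormedAddCommGroup W] [NormedSpace ℂ W]
    (μ : Measure E) (act : E → E → E) (gmu : E) (F : E × E → ℂ) (ψ : E → W) : E → W :=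
  fun v => ∫ z, F (z, act v gmu) • ψ (z⁻¹ * v) ∂μ

lemma aux_vanish {F : E × E → ℂ} (hF : HasCompactSupport F) {z u : E}
    (hz : z ∉ Prod.fst '' tsupport F) : F (z, u) = 0 := by
  apply image_eq_zero_of_notMem_tsupport
  exact fun h => hz ⟨(z, u), h, rfl⟩


theorem piOp_continuous_and_multiplicative
    {W : Type*} [NormedAddCommGroup W] [NormedSpace ℂ W] [CompleteSpace W]
    (μ : Measure E) [μ.IsHaarMeasure] [μ.IsMulRightInvariant] [μ.IsInvInvariant]
    (act : E → E → E)
    (hact_cont : Continuous fun p : E × E => act p.1 p.2)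
    (hact_mul : ∀ z w u : E, act (z * w) u = act z (act w u))
    (hact_one : ∀ u : E, act 1 u = u)
    (gmu : E) :
    (∀ (F : E × E → ℂ), Continuous F → HasCompactSupport F →
        ∀ ψ : E → W, Continuous ψ → Continuous (piOp μ act gmu F ψ)) ∧
    (∀ (F₁ F₂ : E × E → ℂ),
        Continuous F₁ → HasCompactSupport F₁ →
        Continuous F₂ → HasCompactSupport F₂ →
        ∀ ψ : E → W, Continuous ψ →
          piOp μ act gmu (convOp μ act F₁ F₂) ψ =
            piOp μ act gmu F₁ (piOp μ act gmu F₂ ψ)) := by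
  constructor
  · -- continuity
    intro F hFc hFs ψ hψ
    rw [continuous_iff_continuousAt]
    intro v₀
    obtain ⟨V, hVc, hVn⟩ := exists_compact_mem_nhds v₀
    set K : Set E := Prod.fst '' tsupport F with hK
    have hKc : IsCompact K := hFs.image continuous_fst
    obtain ⟨M₁, hM₁⟩ := hFs.isCompact.exists_bound_of_continuousOn hFc.continuousOn
    have hM₁' : ∀ x, ‖F x‖ ≤ max M₁ 0 := by
      intro x
      by_cases hx : x ∈ tsupport F
      · exact le_max_of_le_left (hM₁ x hx)
      · rw [image_eq_zero_of_notMem_tsupport hx]; simp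
    have hC : IsCompact (K⁻¹ * V) := hKc.inv.mul hVc
    obtain ⟨M₂, hM₂⟩ := hC.exists_bound_of_continuousOn hψ.continuousOn
    set bound : E → ℝ := K.indicator (fun _ => max M₁ 0 * M₂) with hbound
    apply continuousAt_of_dominated (bound := bound)
    · filter_upwards with v
      exact ((hFc.comp (continuous_id.prodMk
        (hact_cont.comp (continuous_const.prodMk continuous_const)))).smul
        ((hψ.comp (continuous_inv.mul continuous_const)))).aestronglyMeasurable
    · filter_upwards [hVn] with v hv
      filter_upwards with z
      by_cases hz : z ∈ K
      · rw [hbound, Set.indicator_of_mem hz]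
        rw [norm_smul]
        have h1 : ‖ψ (z⁻¹ * v)‖ ≤ M₂ := hM₂ _ ⟨z⁻¹, Set.inv_mem_inv.2 hz, v, hv, rfl⟩
        exact mul_le_mul (hM₁' _) h1 (norm_nonneg _) (le_max_right _ _)
      · rw [hbound, Set.indicator_of_notMem hz, aux_vanish hFs hz]
        simp
    · rw [hbound, integrable_indicator_iff hKc.measurableSet]
      exact integrableOn_const hKc.measure_lt_top.ne
    · filter_upwards with z
      apply Continuous.continuousAt
      exact (hFc.comp ((continuous_const.prodMk
        (hact_cont.comp (continuous_id.prodMk continuous_const))).comp continuous_id)).smul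
        (hψ.comp (continuous_const.mul continuous_id))
  · -- multiplicativity
    intro F₁ F₂ hc₁ hs₁ hc₂ hs₂ ψ hψ
    funext v
    set u := act v gmu with hu
    set K₁ : Set E := Prod.fst '' tsupport F₁ with hK₁
    set K₂ : Set E := Prod.fst '' tsupport F₂ with hK₂
    have hK₁c : IsCompact K₁ := hs₁.image continuous_fst
    have hK₂c : IsCompact K₂ := hs₂.image continuous_fst
    set G : E × E → W := fun p =>
      (F₁ (p.1, u) * F₂ (p.1⁻¹ * p.2, act p.1⁻¹ u)) • ψ (p.2⁻¹ * v) with hG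
    have hGc : Continuous G := by
      apply Continuous.smul
      · exact ((hc₁.comp ((continuous_fst).prodMk continuous_const)).mul
          (hc₂.comp (((continuous_fst.inv).mul continuous_snd).prodMk
            (hact_cont.comp ((continuous_fst.inv).prodMk continuous_const)))))
      · exact hψ.comp ((continuous_snd.inv).mul continuous_const)
    have hGs : HasCompactSupport G := by
      apply HasCompactSupport.intro (hK₁c.prod (hK₁c.mul hK₂c))
      intro p hp
      simp only [hG]
      by_cases h1 : p.1 ∈ K₁
      · have h2 : p.1⁻¹ * p.2 ∉ K₂ := by
          intro h
          apply hp
          refine ⟨h1, ?_⟩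
          have := Set.mul_mem_mul h1 h
          simpa using this
        rw [aux_vanish hs₂ h2]; simp
      · rw [aux_vanish hs₁ h1]; simp
    have hGi : Integrable G (μ.prod μ) := hGc.integrable_of_hasCompactSupport hGs
    have lhs_eq : piOp μ act gmu (convOp μ act F₁ F₂) ψ v
        = ∫ w, ∫ z, G (z, w) ∂μ ∂μ := by
      simp only [piOp, convOp, hG]
      congr 1
      funext w
      exact (integral_smul_const _ _).symm
    rw [lhs_eq]
    have swap : ∫ w, ∫ z, G (z, w) ∂μ ∂μ = ∫ z, ∫ w, G (z, w) ∂μ ∂μ := by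
      have : Integrable (Function.uncurry fun w z => G (z, w)) (μ.prod μ) := by
        have := hGi.swap
        exact this
      rw [integral_integral_swap this]
    rw [swap]
    simp only [piOp]
    congr 1
    funext z
    have inner : ∫ w, G (z, w) ∂μ
        = F₁ (z, u) • ∫ w, F₂ (z⁻¹ * w, act z⁻¹ u) • ψ (w⁻¹ * v) ∂μ := by
      rw [← integral_smul]
      congr 1
      funext w
      simp only [hG, mul_smul]
    rw [inner]
    congr 1
    have trans : ∫ w, F₂ (z⁻¹ * w, act z⁻¹ u) • ψ (w⁻¹ * v) ∂μ
        = ∫ w, F₂ (z⁻¹ * (z * w), act z⁻¹ u) • ψ ((z * w)⁻¹ * v) ∂μ :=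
      (integral_mul_left_eq_self (fun w => F₂ (z⁻¹ * w, act z⁻¹ u) • ψ (w⁻¹ * v)) z).symm
    rw [trans]
    congr 1
    funext w
    have h1 : z⁻¹ * (z * w) = w := by group
    have h2 : (z * w)⁻¹ * v = w⁻¹ * (z⁻¹ * v) := by group
    have h3 : act (z⁻¹ * v) gmu = act z⁻¹ u := by rw [hu, hact_mul]
    rw [h1, h2, h3]
end
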